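/- The interventional SHAP part satisfies the dummy property: if f([x_i, x_{\setminus i}]) = f([d, x_{\setminus i}]) for all x and all values d (i.e., f does not depend on coordinate i), then φ_{i,int}(f,x) = 0. -/
import Mathlib


/-- `upd x S z` is the vector `[x_S, z_{S̄}]`. -/
noncomputable def upd {M : ℕ} (x : Fin M → ℝ) (S : Finset (Fin M)) (z : Fin M → ℝ) :
    Fin M → ℝ := fun j => if j ∈ S then x j else z j

/-- The coalition `S^R` of features preceding feature `i` in the permutation `R`. -/
def SR {M : ℕ} (i : Fin M) (R : Equiv.Perm (Fin M)) : Finset (Fin M) :=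
  Finset.univ.filter fun j => R.symm j < R.symm i

lemma upd_insert_eq_update {M : ℕ} (x : Fin M → ℝ) (S : Finset (Fin M)) (i : Fin M)
    (z : Fin M → ℝ) :
    upd x (insert i S) z = Function.update (upd x S z) i (x i) := by
  funext j
  by_cases h : j = i
  · subst h; simp [upd]
  · simp [upd, Function.update, h]

/-- Dummy property of the interventional SHAP part: if the model `f` does not depend
on coordinate `i` (i.e. `f([x_i, x_{∖i}]) = f([d, x_{∖i}])` for all `x`, `d`),
then `φ_{i,int}(f,x) = 0`.  `CE S g` denotes `E[g(X) | X_S = x_S]`. -/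
theorem interventional_part_dummy {M : ℕ} (i : Fin M) (f : (Fin M → ℝ) → ℝ)
    (x : Fin M → ℝ) (CE : Finset (Fin M) → ((Fin M → ℝ) → ℝ) → ℝ)
    (hdummy : ∀ (z : Fin M → ℝ) (d : ℝ), f (Function.update z i d) = f z) :
    (1 / (M.factorial : ℝ)) * ∑ R : Equiv.Perm (Fin M),
        (CE (SR i R) (fun z => f (upd x (insert i (SR i R)) z))
          - CE (SR i R) (fun z => f (upd x (SR i R) z))) = 0 := by
  have : ∀ R : Equiv.Perm (Fin M),
      (fun z => f (upd x (insert i (SR i R)) z)) = fun z => f (upd x (SR i R) z) := by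
    intro R
    funext z
    rw [upd_insert_eq_update, hdummy]
  simp only [this, sub_self, Finset.sum_const_zero, mul_zero]
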